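/- Let M = [[A,B],[C,D]] ∈ SU(n,n;ℂ) with A invertible. Then det A / conj(det A) = 1, i.e. det A ∈ ℝ. -/

import Mathlib

open Matrix

/-- For `M = [[A,B],[C,D]] ∈ SU(n,n;ℂ)` with `A` invertible one has
`det A / conj (det A) = 1`, i.e. `det A` is real. -/
theorem detA_div_conj (n : ℕ) (A B C D : Matrix (Fin n) (Fin n) ℂ)
    (hdet : (fromBlocks A B C D).det = 1)
    (hJ : (fromBlocks A B C D)ᴴ * fromBlocks 0 (-1) 1 0 * fromBlocks A B C D
        = fromBlocks 0 (-1) 1 0)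
    (hA : IsUnit A) :
    A.det / (starRingEnd ℂ) A.det = 1 ∧ ∃ r : ℝ, A.det = (r : ℂ) := by
  set M := fromBlocks A B C D with hM
  have hdA : IsUnit A.det := (Matrix.isUnit_iff_isUnit_det A).mp hA
  -- N := (-J) * Mᴴ * J is a right inverse of M
  have hNM : (fromBlocks 0 1 (-1) 0 * Mᴴ * fromBlocks 0 (-1) 1 0) * M = 1 := by
    calc (fromBlocks 0 1 (-1) 0 * Mᴴ * fromBlocks 0 (-1) 1 0) * M
        = fromBlocks 0 1 (-1) 0 * (Mᴴ * fromBlocks 0 (-1) 1 0 * M) := by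
          simp only [Matrix.mul_assoc]
      _ = fromBlocks 0 1 (-1) 0 * fromBlocks 0 (-1) 1 0 := by rw [hJ]
      _ = 1 := by
          rw [Matrix.fromBlocks_multiply]
          simp [Matrix.fromBlocks_one]
  have hMN : M * (fromBlocks 0 1 (-1) 0 * Mᴴ * fromBlocks 0 (-1) 1 0) = 1 :=
    mul_eq_one_comm.mp hNM
  have hNblocks : fromBlocks 0 1 (-1) 0 * Mᴴ * fromBlocks 0 (-1) 1 0
      = fromBlocks Dᴴ (-Bᴴ) (-Cᴴ) Aᴴ := by
    rw [hM, Matrix.fromBlocks_conjTranspose, Matrix.fromBlocks_multiply,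
      Matrix.fromBlocks_multiply]
    congr 1 <;> simp
  rw [hNblocks, hM, Matrix.fromBlocks_multiply, ← Matrix.fromBlocks_one] at hMN
  have h12 : A * (-Bᴴ) + B * Aᴴ = 0 := by
    have := congrArg Matrix.toBlocks₁₂ hMN
    simpa only [Matrix.toBlocks_fromBlocks₁₂] using this
  have h22 : C * (-Bᴴ) + D * Aᴴ = 1 := by
    have := congrArg Matrix.toBlocks₂₂ hMN
    simpa only [Matrix.toBlocks_fromBlocks₂₂] using this
  have hBA : B * Aᴴ = A * Bᴴ := by
    have : A * Bᴴ = A * (-Bᴴ) + B * Aᴴ + A * Bᴴ := by rw [h12]; simp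
    rw [this]
    simp [Matrix.mul_neg]
  -- Schur complement
  have hSA : (D - C * A⁻¹ * B) * Aᴴ = 1 := by
    have : (D - C * A⁻¹ * B) * Aᴴ = D * Aᴴ - C * (A⁻¹ * (B * Aᴴ)) := by
      rw [Matrix.sub_mul]; simp only [Matrix.mul_assoc]
    rw [this, hBA, Matrix.nonsing_inv_mul_cancel_left _ _ hdA]
    rw [← h22]; simp [Matrix.mul_neg, sub_eq_add_neg, add_comm]
  have hconj : (starRingEnd ℂ) A.det = A.det := by
    have hinst : Invertible A := hA.invertible
    have hdM : M.det = A.det * (D - C * A⁻¹ * B).det := by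
      rw [hM, Matrix.det_fromBlocks₁₁]
      congr 2
      rw [Matrix.invOf_eq_nonsing_inv]
    have h1 : A.det * (D - C * A⁻¹ * B).det = 1 := by rw [← hdM, hdet]
    have h2 : (D - C * A⁻¹ * B).det * (starRingEnd ℂ) A.det = 1 := by
      have := congrArg Matrix.det hSA
      rwa [Matrix.det_mul, Matrix.det_conjTranspose, Matrix.det_one] at this
    linear_combination A.det * h2 - (starRingEnd ℂ) A.det * h1
  have hne : A.det ≠ 0 := hdA.ne_zero
  refine ⟨by rw [hconj]; field_simp, ⟨A.det.re, ?_⟩⟩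
  exact ((Complex.conj_eq_iff_re).mp hconj).symm
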